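/- If a quantum state ρ on a multipartite Hilbert space H_1 ⊗ ⋯ ⊗ H_n and local projectors generate joint probabilities satisfying the modified Hardy conditions, then ρ is supported on the orthogonal complement S^⊥ of the subspace S spanned by the product states associated with the zero-probability conditions, and conversely any state ρ supported on S^⊥ with ⟨φ_+|ρ|φ_+⟩ ≠ 0 (where |φ_+⟩ = |u_1=1⟩⋯|u_n=1⟩) satisfies all the modified Hardy conditions. -/

import Mathlib

/-- The product state `⊗ᵢ f i` of an `n`-partite system with local dimensions `d i`,
as an element of `H_1 ⊗ ⋯ ⊗ H_n` modeled by `EuclideanSpace ℂ ((i : Fin n) → Fin (d i))`. -/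
noncomputable def prodG {n : ℕ} {d : Fin n → ℕ}
    (f : (i : Fin n) → EuclideanSpace ℂ (Fin (d i))) :
    EuclideanSpace ℂ ((i : Fin n) → Fin (d i)) :=
  (WithLp.equiv 2 _).symm (fun x => ∏ i, f i (x i))

theorem pos_apply_eq_zero' {H : Type*} [NormedAddCommGroup H] [InnerProductSpace ℂ H]
    [CompleteSpace H] (T : H →L[ℂ] H) (hT : T.IsPositive) (x : H)
    (h : (inner ℂ x (T x) : ℂ).re = 0) : T x = 0 := by
  rw [← ContinuousLinearMap.nonneg_iff_isPositive] at hT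
  obtain ⟨s, hs, h2⟩ : ∃ s : H →L[ℂ] H, IsSelfAdjoint s ∧ s * s = T :=
    ⟨CFC.sqrt T, (IsSelfAdjoint.of_nonneg (CFC.sqrt_nonneg (a := T))), by
      rw [← sq, CFC.sq_sqrt T hT]⟩
  have hx : s x = 0 := by
    have key : (inner ℂ x (T x) : ℂ) = inner ℂ (s x) (s x) := by
      have h3 := ContinuousLinearMap.adjoint_inner_right s x (s x)
      rw [hs.adjoint_eq] at h3
      rw [← h3, ← h2]; rfl
    rw [key] at h
    have hz : (inner ℂ (s x) (s x) : ℂ) = 0 := by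
      rw [← inner_self_ofReal_re]; simp only [RCLike.re_to_complex, h, RCLike.ofReal_zero]
    exact inner_self_eq_zero.mp hz
  calc T x = s (s x) := by rw [← h2]; rfl
  _ = 0 := by rw [hx, map_zero]

lemma prodG_eq_sum' {n : ℕ} {d : Fin n → ℕ}
    (e : (i : Fin n) → Fin (d i) → EuclideanSpace ℂ (Fin (d i)))
    (c : (i : Fin n) → Fin (d i) → ℂ)
    (f : (i : Fin n) → EuclideanSpace ℂ (Fin (d i)))
    (hf : ∀ i, f i = ∑ k, c i k • e i k) :
    prodG f = ∑ x : (i : Fin n) → Fin (d i), (∏ i, c i (x i)) • prodG (fun i => e i (x i)) := by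
  ext y
  have lhs : prodG f y = ∏ i, f i (y i) := rfl
  rw [lhs]
  have rhs : (∑ x : (i : Fin n) → Fin (d i),
      (∏ i, c i (x i)) • prodG (fun i => e i (x i))) y
      = ∑ x : (i : Fin n) → Fin (d i), (∏ i, c i (x i)) * ∏ i, e i (x i) (y i) := by
    rw [WithLp.ofLp_sum, Finset.sum_apply]; rfl
  rw [rhs]
  have step : ∀ i, f i (y i) = ∑ k, c i k * e i k (y i) := by
    intro i; rw [hf i, WithLp.ofLp_sum, Finset.sum_apply]; rfl
  simp_rw [step]
  rw [Finset.prod_univ_sum]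
  congr 1
  funext x
  rw [Finset.prod_mul_distrib]

/-- If a quantum state `ρ` on `H_1 ⊗ ⋯ ⊗ H_n` and local projective
measurements (onto the orthonormal eigenbases `u i`, `v i`) give joint probabilities
satisfying the modified Hardy zero conditions `P(v_r ≠ d_r, u_{r+1} = 1) = 0` (cyclically)
and `P(∀ i : v_i = d_i) = 0` (Born rule, marginals computed by summing over a product
basis of the other parties), then `ρ` is supported on the orthogonal complement of the
subspace `S` spanned by the product states associated with the zero-probability
conditions (i.e. `ρ` annihilates `S`); and conversely, any density operator `ρ`
annihilating `S` with `⟨φ_+|ρ|φ_+⟩ ≠ 0` (`|φ_+⟩ = |u_1=1⟩⋯|u_n=1⟩`) satisfies all the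
modified Hardy conditions, with `P(∀ i : u_i = 1) = ⟨φ_+|ρ|φ_+⟩ > 0`.
(Outcome "1" of party `i` is `⟨0, _⟩ : Fin (d i)`, outcome "d_i" is `⟨d i - 1, _⟩`.) -/
theorem statement17 (n : ℕ) (hn : 2 ≤ n) (d : Fin n → ℕ) (hd : ∀ i, 1 ≤ d i)
    (u v : (i : Fin n) → Fin (d i) → EuclideanSpace ℂ (Fin (d i)))
    (hu : ∀ i, Orthonormal ℂ (u i)) (hv : ∀ i, Orthonormal ℂ (v i))
    (next : Fin n → Fin n) (hnext : ∀ r : Fin n, (next r).1 = (r.1 + 1) % n)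
    -- mixed product basis used to compute the marginals of the second condition:
    (Φ : (r : Fin n) → ((i : Fin n) → Fin (d i)) → EuclideanSpace ℂ ((i : Fin n) → Fin (d i)))
    (hΦ : ∀ r x, Φ r x =
      prodG (Function.update (fun i => v i (x i)) (next r) (u (next r) (x (next r)))))
    -- the subspace `S` spanned by the product states of the zero-probability conditions:
    (S : Submodule ℂ (EuclideanSpace ℂ ((i : Fin n) → Fin (d i))))
    (hS : S = Submodule.span ℂ
      (insert (prodG (fun i => v i ⟨d i - 1, Nat.sub_lt (hd i) Nat.one_pos⟩))
        {ψ | ∃ (r : Fin n) (k : Fin (d r)) (g : (i : Fin n) → Fin (d i) × Bool),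
          k ≠ ⟨d r - 1, Nat.sub_lt (hd r) Nat.one_pos⟩ ∧
          ψ = prodG (Function.update
            (Function.update
              (fun i => if (g i).2 then v i (g i).1 else u i (g i).1) r (v r k))
            (next r) (u (next r) ⟨0, hd (next r)⟩))})) :
    (∀ ρ : EuclideanSpace ℂ ((i : Fin n) → Fin (d i)) →L[ℂ]
        EuclideanSpace ℂ ((i : Fin n) → Fin (d i)),
      ρ.IsPositive →
      LinearMap.trace ℂ _ (ρ : EuclideanSpace ℂ ((i : Fin n) → Fin (d i)) →ₗ[ℂ]
        EuclideanSpace ℂ ((i : Fin n) → Fin (d i))) = 1 →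
      -- the zero conditions:
      (∀ r : Fin n, ∑ x : (i : Fin n) → Fin (d i),
        (if x r ≠ ⟨d r - 1, Nat.sub_lt (hd r) Nat.one_pos⟩ ∧ x (next r) = ⟨0, hd (next r)⟩
          then (inner ℂ (Φ r x) (ρ (Φ r x)) : ℂ).re else 0) = 0) →
      (inner ℂ (prodG (fun i => v i ⟨d i - 1, Nat.sub_lt (hd i) Nat.one_pos⟩))
        (ρ (prodG (fun i => v i ⟨d i - 1, Nat.sub_lt (hd i) Nat.one_pos⟩))) : ℂ).re = 0 →
      ∀ φ ∈ S, ρ φ = 0) ∧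
    (∀ ρ : EuclideanSpace ℂ ((i : Fin n) → Fin (d i)) →L[ℂ]
        EuclideanSpace ℂ ((i : Fin n) → Fin (d i)),
      ρ.IsPositive →
      LinearMap.trace ℂ _ (ρ : EuclideanSpace ℂ ((i : Fin n) → Fin (d i)) →ₗ[ℂ]
        EuclideanSpace ℂ ((i : Fin n) → Fin (d i))) = 1 →
      (∀ φ ∈ S, ρ φ = 0) →
      (inner ℂ (prodG (fun i => u i ⟨0, hd i⟩)) (ρ (prodG (fun i => u i ⟨0, hd i⟩))) : ℂ).re ≠ 0 →
      (∀ r : Fin n, ∑ x : (i : Fin n) → Fin (d i),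
        (if x r ≠ ⟨d r - 1, Nat.sub_lt (hd r) Nat.one_pos⟩ ∧ x (next r) = ⟨0, hd (next r)⟩
          then (inner ℂ (Φ r x) (ρ (Φ r x)) : ℂ).re else 0) = 0) ∧
      (inner ℂ (prodG (fun i => v i ⟨d i - 1, Nat.sub_lt (hd i) Nat.one_pos⟩))
        (ρ (prodG (fun i => v i ⟨d i - 1, Nat.sub_lt (hd i) Nat.one_pos⟩))) : ℂ).re = 0 ∧
      0 < (inner ℂ (prodG (fun i => u i ⟨0, hd i⟩))
        (ρ (prodG (fun i => u i ⟨0, hd i⟩))) : ℂ).re) := by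
  classical
  have hnr : ∀ r : Fin n, next r ≠ r := by
    intro r hEq
    have h1 : (next r).1 = (r.1 + 1) % n := hnext r
    rw [hEq] at h1
    rcases Nat.lt_or_ge (r.1 + 1) n with h | h
    · rw [Nat.mod_eq_of_lt h] at h1; omega
    · have hr : r.1 < n := r.2
      have hrn : r.1 + 1 = n := by omega
      rw [hrn, Nat.mod_self] at h1
      omega
  have hnneg : ∀ (ρ : EuclideanSpace ℂ ((i : Fin n) → Fin (d i)) →L[ℂ]
      EuclideanSpace ℂ ((i : Fin n) → Fin (d i))), ρ.IsPositive →
      ∀ ψ, 0 ≤ (inner ℂ ψ (ρ ψ) : ℂ).re := by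
    intro ρ hpos ψ
    exact (Complex.nonneg_iff.mp (hpos.inner_nonneg_right ψ)).1
  have hexp : ∀ (i : Fin n) (w : EuclideanSpace ℂ (Fin (d i))),
      ∃ c : Fin (d i) → ℂ, w = ∑ m, c m • v i m := by
    intro i w
    haveI : Nonempty (Fin (d i)) := ⟨⟨0, hd i⟩⟩
    have hspan : Submodule.span ℂ (Set.range (v i)) = ⊤ :=
      (hv i).linearIndependent.span_eq_top_of_card_eq_finrank (by simp)
    have hw : w ∈ Submodule.span ℂ (Set.range (v i)) := by rw [hspan]; trivial
    obtain ⟨c, hc⟩ := (Submodule.mem_span_range_iff_exists_fun ℂ).mp hw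
    exact ⟨c, hc.symm⟩
  constructor
  · -- forward direction
    intro ρ hpos htr hzero hvz
    have h0 : ∀ (r : Fin n) (x : (i : Fin n) → Fin (d i)),
        x r ≠ ⟨d r - 1, Nat.sub_lt (hd r) Nat.one_pos⟩ →
        x (next r) = ⟨0, hd (next r)⟩ → ρ (Φ r x) = 0 := by
      intro r x hx1 hx2
      have hterm := (Finset.sum_eq_zero_iff_of_nonneg (by
        intro y _
        split
        · exact hnneg ρ hpos _
        · exact le_refl 0)).mp (hzero r) x (Finset.mem_univ x)
      rw [if_pos ⟨hx1, hx2⟩] at hterm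
      exact pos_apply_eq_zero' ρ hpos _ hterm
    intro φ hφ
    rw [hS] at hφ
    have hker : Submodule.span ℂ
        (insert (prodG (fun i => v i ⟨d i - 1, Nat.sub_lt (hd i) Nat.one_pos⟩))
          {ψ | ∃ (r : Fin n) (k : Fin (d r)) (g : (i : Fin n) → Fin (d i) × Bool),
            k ≠ ⟨d r - 1, Nat.sub_lt (hd r) Nat.one_pos⟩ ∧
            ψ = prodG (Function.update
              (Function.update
                (fun i => if (g i).2 then v i (g i).1 else u i (g i).1) r (v r k))
              (next r) (u (next r) ⟨0, hd (next r)⟩))}) ≤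
        LinearMap.ker (ρ : EuclideanSpace ℂ ((i : Fin n) → Fin (d i)) →ₗ[ℂ]
          EuclideanSpace ℂ ((i : Fin n) → Fin (d i))) := by
      rw [Submodule.span_le]
      intro ψ hψ
      simp only [SetLike.mem_coe, LinearMap.mem_ker, ContinuousLinearMap.coe_coe]
      rw [Set.mem_insert_iff] at hψ
      rcases hψ with rfl | hψ
      · exact pos_apply_eq_zero' ρ hpos _ hvz
      · obtain ⟨r, k, g, hk, rfl⟩ := hψ
        set F := Function.update (Function.update
          (fun i => if (g i).2 then v i (g i).1 else u i (g i).1) r (v r k))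
          (next r) (u (next r) ⟨0, hd (next r)⟩) with hF
        set e : (i : Fin n) → Fin (d i) → EuclideanSpace ℂ (Fin (d i)) :=
          Function.update (fun i => v i) (next r) (u (next r)) with he
        set c : (i : Fin n) → Fin (d i) → ℂ :=
          Function.update (Function.update
            (fun i => Classical.choose (hexp i (F i)))
            r (fun m => if m = k then (1 : ℂ) else 0))
          (next r) (fun m => if m = ⟨0, hd (next r)⟩ then (1 : ℂ) else 0) with hc
        have hf : ∀ i, F i = ∑ m, c i m • e i m := by
          intro i
          by_cases h1 : i = next r
          · subst h1
            have hFi : F (next r) = u (next r) ⟨0, hd (next r)⟩ := Function.update_self _ _ _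
            have hci : c (next r) = fun m => if m = ⟨0, hd (next r)⟩ then (1 : ℂ) else 0 :=
              Function.update_self _ _ _
            have hei : e (next r) = u (next r) := Function.update_self _ _ _
            rw [hFi, hci, hei]
            simp [ite_smul]
          · by_cases h2 : i = r
            · rw [h2]
              have hFi : F r = v r k := by
                rw [hF, Function.update_of_ne (hnr r).symm, Function.update_self]
              have hci : c r = fun m => if m = k then (1 : ℂ) else 0 := by
                rw [hc, Function.update_of_ne (hnr r).symm, Function.update_self]
              have hei : e r = v r := by rw [he, Function.update_of_ne (hnr r).symm]
              rw [hFi, hci, hei]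
              simp [ite_smul]
            · have hci : c i = Classical.choose (hexp i (F i)) := by
                rw [hc, Function.update_of_ne h1, Function.update_of_ne h2]
              have hei : e i = v i := by rw [he, Function.update_of_ne h1]
              rw [hci, hei]
              exact Classical.choose_spec (hexp i (F i))
        have hΦx : ∀ x, prodG (fun i => e i (x i)) = Φ r x := by
          intro x
          rw [hΦ r x]
          have harg : (fun i => e i (x i)) =
              Function.update (fun i => v i (x i)) (next r) (u (next r) (x (next r))) := by
            funext i
            by_cases h1 : i = next r
            · subst h1
              rw [Function.update_self]
              have hei : e (next r) = u (next r) := Function.update_self _ _ _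
              rw [hei]
            · rw [Function.update_of_ne h1]
              have hei : e i = v i := by rw [he, Function.update_of_ne h1]
              rw [hei]
          rw [harg]
        rw [prodG_eq_sum' e c F hf, map_sum]
        apply Finset.sum_eq_zero
        intro x _
        rw [map_smul, hΦx x]
        by_cases hx : x r = k ∧ x (next r) = ⟨0, hd (next r)⟩
        · rw [h0 r x (by rw [hx.1]; exact hk) hx.2, smul_zero]
        · have hcz : (∏ i, c i (x i)) = 0 := by
            rcases not_and_or.mp hx with h | h
            · apply Finset.prod_eq_zero (Finset.mem_univ r)
              simp only [hc, Function.update_of_ne (hnr r).symm, Function.update_self]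
              simp [h]
            · apply Finset.prod_eq_zero (Finset.mem_univ (next r))
              simp only [hc, Function.update_self]
              simp [h]
          rw [hcz, zero_smul]
    have := hker hφ
    simpa using this
  · -- converse direction
    intro ρ hpos htr hker hne
    refine ⟨?_, ?_, ?_⟩
    · intro r
      apply Finset.sum_eq_zero
      intro x _
      by_cases hx : x r ≠ ⟨d r - 1, Nat.sub_lt (hd r) Nat.one_pos⟩ ∧
          x (next r) = ⟨0, hd (next r)⟩
      · rw [if_pos hx]
        have hmem : Φ r x ∈ S := by
          rw [hS]
          apply Submodule.subset_span
          refine Set.mem_insert_iff.mpr (Or.inr ⟨r, x r, fun i => (x i, true), hx.1, ?_⟩)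
          rw [hΦ r x, hx.2]
          congr 1
          rw [show (fun i => if ((fun j => (x j, true)) i).2
              then v i ((fun j => (x j, true)) i).1
              else u i ((fun j => (x j, true)) i).1) = fun i => v i (x i) from rfl]
          rw [Function.update_eq_self]
        rw [hker _ hmem]
        simp
      · rw [if_neg hx]
    · have hmem : prodG (fun i => v i ⟨d i - 1, Nat.sub_lt (hd i) Nat.one_pos⟩) ∈ S := by
        rw [hS]; exact Submodule.subset_span (Set.mem_insert _ _)
      rw [hker _ hmem]
      simp
    · exact lt_of_le_of_ne (hnneg ρ hpos _) (Ne.symm hne)
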